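/- Let λ > 0 and 0 < δ < δ_s(λ) := 2(1 + √(1 + 1/λ²)), and set α = −1 + δ/2. For Y > δ define b²(Y) = (2/(Y − δ)²)·(δα − 1/λ² − (δ/2)Y + √(1/λ² + δ)·√(Y² − δY + 1/λ² + δ)). Then lim_{Y → ∞} Y·b²(Y) = 2(√(1/λ² + δ) − δ/2); in particular, since the theta quotient Y diverges as (1 − ρ²)^{−3/2} at the rim ρ → 1 of the disk, b² vanishes there like (1 − ρ²)³ in the non-static case. -/

import Mathlib

/-- Let `λ > 0`, `0 < δ < δ_s(λ) = 2(1 + √(1 + 1/λ²))`, `α = −1 + δ/2`.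
For `Y > δ` define
`b²(Y) = (2/(Y − δ)²)·(δα − 1/λ² − (δ/2)Y + √(1/λ² + δ)·√(Y² − δY + 1/λ² + δ))`.
Then `lim_{Y → ∞} Y·b²(Y) = 2(√(1/λ² + δ) − δ/2)`; in particular, since the
theta quotient `Y` diverges as `(1 − ρ²)^{−3/2}` at the rim `ρ → 1` of the
disk, `b²` vanishes there like `(1 − ρ²)³` in the non-static case. -/
theorem stmt11 (lam δ α : ℝ) (hlam : 0 < lam) (hδ0 : 0 < δ)
    (hδs : δ < 2*(1 + Real.sqrt (1 + 1/lam^2)))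
    (hα : α = -1 + δ/2) :
    Filter.Tendsto
      (fun Y : ℝ => Y * ((2/(Y - δ)^2) *
        (δ*α - 1/lam^2 - (δ/2)*Y
          + Real.sqrt (1/lam^2 + δ) * Real.sqrt (Y^2 - δ*Y + 1/lam^2 + δ))))
      Filter.atTop (nhds (2*(Real.sqrt (1/lam^2 + δ) - δ/2))) := by
  set c : ℝ := 1/lam^2 + δ with hc
  set s : ℝ := Real.sqrt c with hs
  -- auxiliary limits
  have hYsub : Filter.Tendsto (fun Y : ℝ => Y - δ) Filter.atTop Filter.atTop := by
    simpa [sub_eq_add_neg] using Filter.tendsto_atTop_add_const_right Filter.atTop (-δ)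
      Filter.tendsto_id
  have hA : Filter.Tendsto (fun Y : ℝ => δ/(Y - δ)) Filter.atTop (nhds 0) :=
    Filter.Tendsto.div_atTop tendsto_const_nhds hYsub
  have hB : Filter.Tendsto (fun Y : ℝ => (δ*α - 1/lam^2)/Y) Filter.atTop (nhds 0) :=
    Filter.Tendsto.div_atTop tendsto_const_nhds Filter.tendsto_id
  have hδY : Filter.Tendsto (fun Y : ℝ => δ/Y) Filter.atTop (nhds 0) :=
    Filter.Tendsto.div_atTop tendsto_const_nhds Filter.tendsto_id
  have hC : Filter.Tendsto (fun Y : ℝ => c/Y^2) Filter.atTop (nhds 0) :=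
    Filter.Tendsto.div_atTop tendsto_const_nhds (Filter.tendsto_pow_atTop (by norm_num))
  have hIn : Filter.Tendsto (fun Y : ℝ => 1 - δ/Y + c/Y^2) Filter.atTop (nhds 1) := by
    have one : Filter.Tendsto (fun _ : ℝ => (1:ℝ)) Filter.atTop (nhds 1) :=
      tendsto_const_nhds
    have := (one.sub hδY).add hC
    simpa using this
  have hD : Filter.Tendsto (fun Y : ℝ => Real.sqrt (1 - δ/Y + c/Y^2))
      Filter.atTop (nhds 1) := by
    have := (Real.continuous_sqrt.tendsto 1).comp hIn
    rw [Real.sqrt_one] at this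
    exact this
  have final : Filter.Tendsto
      (fun Y : ℝ => 2 * (1 + δ/(Y-δ))^2 *
        ((δ*α - 1/lam^2)/Y - δ/2 + s * Real.sqrt (1 - δ/Y + c/Y^2)))
      Filter.atTop (nhds (2 * (1 + 0)^2 * (0 - δ/2 + s * 1))) :=
    (tendsto_const_nhds.mul ((tendsto_const_nhds.add hA).pow 2)).mul
      ((hB.sub tendsto_const_nhds).add (tendsto_const_nhds.mul hD))
  have hval : 2 * ((1:ℝ) + 0)^2 * (0 - δ/2 + s * 1) = 2*(s - δ/2) := by ring
  rw [hval] at final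
  refine final.congr' ?_
  filter_upwards [Filter.eventually_gt_atTop δ] with Y hYδ
  have hY0 : 0 < Y := hδ0.trans hYδ
  have hYd : Y - δ ≠ 0 := by linarith
  have hYne : Y ≠ 0 := ne_of_gt hY0
  have key : Real.sqrt (Y^2 - δ*Y + 1/lam^2 + δ) = Y * Real.sqrt (1 - δ/Y + c/Y^2) := by
    have h2 : Y^2 - δ*Y + 1/lam^2 + δ = Y^2 * (1 - δ/Y + c/Y^2) := by
      rw [hc]
      field_simp
      ring
    rw [h2, Real.sqrt_mul (sq_nonneg Y), Real.sqrt_sq hY0.le]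
  rw [key]
  have h1 : (1 : ℝ) + δ/(Y-δ) = Y/(Y-δ) := by field_simp; ring
  rw [h1]
  field_simp
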